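/- The critical value is nonincreasing in N: for every natural number N ≥ 1, λ_c(N+1) ≤ λ_c(N). -/

import Mathlib

open Matrix Polynomial Filter

/-- The (N+1)×(N+1) matrix A_N(λ): diagonal −1, entry (0,1) equal to 2λ,
entries λ on the other super/sub-diagonal positions, 0 elsewhere. -/
noncomputable def matA (lam : ℝ) (N : ℕ) : Matrix (Fin (N + 1)) (Fin (N + 1)) ℝ :=
  Matrix.of fun j k =>
    if j = k then -1
    else if (j : ℕ) = 0 ∧ (k : ℕ) = 1 then 2 * lam
    else if (j : ℕ) + 1 = (k : ℕ) ∨ (k : ℕ) + 1 = (j : ℕ) then lam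
    else 0

/-- The (N+1)×(N+1) matrix C_N: zero diagonal, entry (0,1) equal to 2,
entries 1 on the other super/sub-diagonal positions, 0 elsewhere;
so that A_N(λ) = −I + λ·C_N. -/
noncomputable def matC (N : ℕ) : Matrix (Fin (N + 1)) (Fin (N + 1)) ℝ :=
  Matrix.of fun j k =>
    if j = k then 0
    else if (j : ℕ) = 0 ∧ (k : ℕ) = 1 then 2
    else if (j : ℕ) + 1 = (k : ℕ) ∨ (k : ℕ) + 1 = (j : ℕ) then 1
    else 0

/-- The critical value λ_c(N) = inf {λ > 0 : det(−A_N(λ)) = 0}. -/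
noncomputable def lamCrit (N : ℕ) : ℝ :=
  sInf {lam : ℝ | 0 < lam ∧ (-(matA lam N)).det = 0}

section Aux

open Real

lemma negA_eq (lam : ℝ) (n : ℕ) : -(matA lam n) = 1 - lam • matC n := by
  ext j k
  simp only [matA, matC, Matrix.neg_apply, Matrix.sub_apply, Matrix.one_apply,
    Matrix.smul_apply, Matrix.of_apply, smul_eq_mul]
  split_ifs <;> ring

lemma negA_mulVec (lam : ℝ) (n : ℕ) (v : Fin (n + 1) → ℝ) :
    (-(matA lam n)) *ᵥ v = v - lam • ((matC n) *ᵥ v) := by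
  rw [negA_eq, Matrix.sub_mulVec, Matrix.one_mulVec, Matrix.smul_mulVec]

lemma matC_eq_zero {n : ℕ} {j k : Fin (n + 1)} (h1 : (j : ℕ) + 1 ≠ (k : ℕ))
    (h2 : (k : ℕ) + 1 ≠ (j : ℕ)) : matC n j k = 0 := by
  simp only [matC, Matrix.of_apply, Fin.ext_iff]
  split_ifs <;> first | rfl | omega

lemma matC_01 {n : ℕ} {j k : Fin (n + 1)} (h1 : (j : ℕ) = 0) (h2 : (k : ℕ) = 1) :
    matC n j k = 2 := by
  simp only [matC, Matrix.of_apply, Fin.ext_iff]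
  split_ifs <;> first | rfl | omega

lemma matC_adj {n : ℕ} {j k : Fin (n + 1)}
    (h : ((j : ℕ) + 1 = (k : ℕ) ∧ (j : ℕ) ≠ 0) ∨ (k : ℕ) + 1 = (j : ℕ)) :
    matC n j k = 1 := by
  simp only [matC, Matrix.of_apply, Fin.ext_iff]
  split_ifs <;> first | rfl | omega

lemma matC_mulVec (n : ℕ) (v : Fin (n + 2) → ℝ) (j : Fin (n + 2)) :
    ((matC (n + 1)) *ᵥ v) j =
      if (j : ℕ) = 0 then 2 * v ⟨1, by omega⟩
      else if h : (j : ℕ) = n + 1 then v ⟨n, by omega⟩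
      else v ⟨(j : ℕ) - 1, Nat.lt_of_le_of_lt (Nat.sub_le _ _) j.isLt⟩ +
        v ⟨(j : ℕ) + 1, by have := j.isLt; omega⟩ := by
  simp only [Matrix.mulVec, dotProduct]
  rcases Nat.eq_zero_or_pos (j : ℕ) with h0 | hpos
  · rw [if_pos h0]
    rw [Finset.sum_eq_single_of_mem (⟨1, by omega⟩ : Fin (n + 2)) (Finset.mem_univ _)]
    · have h2 : matC (n+1) j ⟨1, by omega⟩ = 2 := matC_01 h0 rfl
      rw [h2]
    · intro k _ hk
      have hk' : (k : ℕ) ≠ 1 := fun h => hk (Fin.ext h)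
      have hz : matC (n+1) j k = 0 := matC_eq_zero (by omega) (by omega)
      rw [hz, zero_mul]
  · rw [if_neg (by omega)]
    by_cases hlast : (j : ℕ) = n + 1
    · rw [dif_pos hlast]
      rw [Finset.sum_eq_single_of_mem (⟨n, by omega⟩ : Fin (n + 2)) (Finset.mem_univ _)]
      · have h1 : matC (n+1) j ⟨n, by omega⟩ = 1 := matC_adj (Or.inr (by simpa using hlast.symm))
        rw [h1, one_mul]
      · intro k _ hk
        have hk' : (k : ℕ) ≠ n := fun h => hk (Fin.ext h)
        have hz : matC (n+1) j k = 0 := matC_eq_zero (by omega) (by omega)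
        rw [hz, zero_mul]
    · rw [dif_neg hlast]
      set a : Fin (n + 2) := ⟨(j : ℕ) - 1, Nat.lt_of_le_of_lt (Nat.sub_le _ _) j.isLt⟩ with ha
      set b : Fin (n + 2) := ⟨(j : ℕ) + 1, by have := j.isLt; omega⟩ with hb
      have hab : a ≠ b := Fin.ne_of_val_ne (by show (j:ℕ) - 1 ≠ (j:ℕ) + 1; omega)
      have hsum : ∑ k ∈ ({a, b} : Finset (Fin (n+2))), matC (n+1) j k * v k
          = ∑ k, matC (n+1) j k * v k := by
        apply Finset.sum_subset (Finset.subset_univ _)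
        intro k _ hk
        simp only [Finset.mem_insert, Finset.mem_singleton] at hk
        push_neg at hk
        have hk1 : (k : ℕ) ≠ (j : ℕ) - 1 := fun h => hk.1 (Fin.ext h)
        have hk2 : (k : ℕ) ≠ (j : ℕ) + 1 := fun h => hk.2 (Fin.ext h)
        have hz : matC (n+1) j k = 0 := matC_eq_zero (by omega) (by omega)
        rw [hz, zero_mul]
      rw [← hsum, Finset.sum_pair hab]
      have h1 : matC (n+1) j a = 1 := matC_adj (Or.inr (by show (j:ℕ) - 1 + 1 = (j:ℕ); omega))
      have h2 : matC (n+1) j b = 1 := matC_adj (Or.inl ⟨rfl, by omega⟩)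
      rw [h1, h2, one_mul, one_mul]

lemma cos_rec (θ : ℝ) (m : ℕ) :
    Real.cos ((m : ℝ) * θ) + Real.cos (((m : ℝ) + 2) * θ)
      = 2 * Real.cos θ * Real.cos (((m : ℝ) + 1) * θ) := by
  have h1 : (m : ℝ) * θ = ((m : ℝ) + 1) * θ - θ := by ring
  have h2 : ((m : ℝ) + 2) * θ = ((m : ℝ) + 1) * θ + θ := by ring
  rw [h1, h2, Real.cos_sub, Real.cos_add]; ring

/-- membership: `1/(2 cos (π/(2n+4)))` is a positive root for the size `n+2` matrix. -/
lemma mem_root (n : ℕ) :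
    (1 / (2 * Real.cos (π / (2 * (n : ℝ) + 4)))) ∈
      {lam : ℝ | 0 < lam ∧ (-(matA lam (n + 1))).det = 0} := by
  set θ : ℝ := π / (2 * (n : ℝ) + 4) with hθdef
  have hden : (0:ℝ) < 2 * (n : ℝ) + 4 := by positivity
  have hθpos : 0 < θ := div_pos Real.pi_pos hden
  have hθlt : θ < π / 2 := by
    rw [hθdef, div_lt_div_iff₀ hden two_pos]
    nlinarith [Real.pi_pos]
  have hc : 0 < Real.cos θ := Real.cos_pos_of_mem_Ioo ⟨by linarith, hθlt⟩
  refine ⟨by positivity, ?_⟩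
  rw [← Matrix.exists_mulVec_eq_zero_iff]
  refine ⟨fun j : Fin (n + 2) => Real.cos (((j : ℕ) : ℝ) * θ), ?_, ?_⟩
  · intro hzero
    have h0 := congrFun hzero ⟨0, by omega⟩
    simp at h0
  · rw [negA_mulVec]
    funext j
    simp only [Pi.sub_apply, Pi.smul_apply, smul_eq_mul]
    rw [matC_mulVec]
    rcases Nat.eq_zero_or_pos (j : ℕ) with h0 | hpos
    · rw [if_pos h0, h0]
      show Real.cos ((0:ℕ) * θ) - 1 / (2 * Real.cos θ) * (2 * Real.cos (((1:ℕ):ℝ) * θ)) = 0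
      push_cast
      rw [zero_mul, Real.cos_zero, one_mul]
      field_simp
      ring
    · rw [if_neg (by omega)]
      by_cases hlast : (j : ℕ) = n + 1
      · rw [dif_pos hlast]
        show Real.cos (((j:ℕ):ℝ) * θ) - 1 / (2 * Real.cos θ) * Real.cos (((n:ℕ):ℝ) * θ) = 0
        have hzero : Real.cos (((n : ℝ) + 2) * θ) = 0 := by
          have : ((n : ℝ) + 2) * θ = π / 2 := by
            rw [hθdef]; field_simp; ring
          rw [this, Real.cos_pi_div_two]
        have hrec := cos_rec θ n
        rw [hzero, add_zero] at hrec
        rw [hlast, hrec]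
        push_cast
        field_simp
        ring
      · rw [dif_neg hlast]
        obtain ⟨m, hm⟩ : ∃ m, (j : ℕ) = m + 1 := ⟨(j : ℕ) - 1, by omega⟩
        have hrec := cos_rec θ m
        show Real.cos (((j:ℕ):ℝ) * θ) - 1 / (2 * Real.cos θ) *
          (Real.cos ((((j:ℕ) - 1 : ℕ):ℝ) * θ) + Real.cos ((((j:ℕ) + 1 : ℕ):ℝ) * θ)) = 0
        have e1 : ((j : ℕ) - 1 : ℕ) = m := by omega
        have e2 : ((j : ℕ) + 1 : ℕ) = m + 2 := by omega
        rw [e1, e2, hm]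
        push_cast
        rw [hrec]
        field_simp
        ring

/-- Nonsingularity: if `0 < θ`, `(n+2)θ ≤ π/2`, `0 < lam` and `2·lam·cos θ < 1`,
then the size `n+2` matrix is nonsingular. -/
lemma nonsing (n : ℕ) (θ lam : ℝ) (hθ : 0 < θ) (hn : ((n : ℝ) + 2) * θ ≤ π / 2)
    (hlam : 0 < lam) (hlt : 2 * lam * Real.cos θ < 1) :
    (-(matA lam (n + 1))).det ≠ 0 := by
  intro hdet
  obtain ⟨v, hv0, hv⟩ := Matrix.exists_mulVec_eq_zero_iff.mpr hdet
  set w : Fin (n + 2) → ℝ := fun j => Real.cos (((j : ℕ) : ℝ) * θ) with hw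
  have hangle : ∀ j : Fin (n + 2), ((j : ℕ) : ℝ) * θ < π / 2 := by
    intro j
    have hjlt : ((j : ℕ) : ℝ) < (n : ℝ) + 2 := by exact_mod_cast j.isLt
    nlinarith
  have hwpos : ∀ j : Fin (n + 2), 0 < w j := by
    intro j
    apply Real.cos_pos_of_mem_Ioo
    have h1 : (0:ℝ) ≤ ((j : ℕ) : ℝ) * θ := by positivity
    have h2 := Real.pi_pos
    exact ⟨by linarith, hangle j⟩
  obtain ⟨j₀, hj₀⟩ := Finite.exists_max (fun j : Fin (n + 2) => |v j| / w j)
  have hvj₀ : v j₀ ≠ 0 := by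
    intro h
    apply hv0
    funext k
    have hk := hj₀ k
    rw [h] at hk
    simp only [abs_zero, zero_div] at hk
    have h1 : 0 ≤ |v k| / w k := div_nonneg (abs_nonneg _) (hwpos k).le
    have h2 : |v k| / w k = 0 := le_antisymm hk h1
    have := (div_eq_zero_iff.mp h2).resolve_right (hwpos k).ne'
    simpa using this
  set ε : ℝ := if 0 < v j₀ then 1 else -1 with hε
  set u : Fin (n + 2) → ℝ := ε • v with hu
  have huv : (-(matA lam (n + 1))) *ᵥ u = 0 := by
    rw [hu, Matrix.mulVec_smul, hv, smul_zero]
  have huj₀ : u j₀ = |v j₀| := by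
    by_cases h : 0 < v j₀
    · simp [hu, hε, h, abs_of_pos h]
    · have hneg : v j₀ < 0 := lt_of_le_of_ne (not_lt.mp h) hvj₀
      simp [hu, hε, h, abs_of_neg hneg]
  have huj₀pos : 0 < u j₀ := by rw [huj₀]; exact abs_pos.mpr hvj₀
  set t : ℝ := u j₀ / w j₀ with ht
  have htpos : 0 < t := div_pos huj₀pos (hwpos j₀)
  have htw : u j₀ = t * w j₀ := by
    rw [ht, div_mul_cancel₀ _ (hwpos j₀).ne']
  have hub : ∀ k, u k ≤ t * w k := by
    intro k
    have habs : |u k| = |v k| := by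
      rw [hu]; by_cases h : 0 < v j₀ <;> simp [hε, h]
    have h1 : u k ≤ |v k| := habs ▸ le_abs_self (u k)
    have h2 : |v k| / w k ≤ |v j₀| / w j₀ := hj₀ k
    calc u k ≤ |v k| := h1
      _ = (|v k| / w k) * w k := by rw [div_mul_cancel₀ _ (hwpos k).ne']
      _ ≤ (|v j₀| / w j₀) * w k := mul_le_mul_of_nonneg_right h2 (hwpos k).le
      _ = t * w k := by rw [ht, huj₀]
  -- the equation at j₀
  have heq : u j₀ = lam * ((matC (n + 1)) *ᵥ u) j₀ := by
    have := congrFun huv j₀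
    rw [negA_mulVec] at this
    simp only [Pi.sub_apply, Pi.smul_apply, smul_eq_mul, Pi.zero_apply] at this
    linarith
  have hcθ : 0 < Real.cos θ := by
    apply Real.cos_pos_of_mem_Ioo
    refine ⟨by linarith [Real.pi_pos], by nlinarith⟩
  -- strict bound : lam * (C u) j₀ < u j₀
  have hkey : lam * ((matC (n + 1)) *ᵥ u) j₀ < u j₀ := by
    rw [matC_mulVec]
    rcases Nat.eq_zero_or_pos (j₀ : ℕ) with h0 | hpos
    · rw [if_pos h0]
      have hw1 : w ⟨1, by omega⟩ = Real.cos θ := by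
        show Real.cos (((1:ℕ):ℝ) * θ) = Real.cos θ
        norm_num
      have hb := hub ⟨1, by omega⟩
      rw [hw1] at hb
      have hwj₀ : w j₀ = 1 := by
        show Real.cos (((j₀:ℕ):ℝ) * θ) = 1
        rw [h0]; norm_num
      rw [htw, hwj₀, mul_one]
      nlinarith
    · rw [if_neg (by omega)]
      by_cases hlast : (j₀ : ℕ) = n + 1
      · rw [dif_pos hlast]
        have hb := hub ⟨n, by omega⟩
        have hwn : w (⟨n, by omega⟩ : Fin (n + 2)) = Real.cos ((n : ℝ) * θ) := rfl
        have hrec := cos_rec θ n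
        have hcn2 : 0 ≤ Real.cos (((n : ℝ) + 2) * θ) := by
          apply Real.cos_nonneg_of_mem_Icc
          constructor
          · have : (0:ℝ) ≤ ((n : ℝ) + 2) * θ := by positivity
            linarith [Real.pi_pos]
          · exact hn
        have hwj₀ : w j₀ = Real.cos (((n : ℝ) + 1) * θ) := by
          show Real.cos (((j₀:ℕ):ℝ) * θ) = _
          rw [hlast]; push_cast; ring_nf
        have hwj₀pos := hwpos j₀
        rw [htw, hwj₀]
        rw [hwn] at hb
        rw [hwj₀] at hwj₀pos
        have hA := mul_le_mul_of_nonneg_left hb hlam.le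
        have hB : 0 ≤ lam * t * Real.cos (((n:ℝ) + 2) * θ) :=
          mul_nonneg (mul_nonneg hlam.le htpos.le) hcn2
        have hC := mul_lt_mul_of_pos_right hlt (mul_pos htpos hwj₀pos)
        have hD : lam * (t * Real.cos ((n:ℝ) * θ))
            = 2 * lam * Real.cos θ * (t * Real.cos (((n:ℝ) + 1) * θ))
              - lam * t * Real.cos (((n:ℝ) + 2) * θ) := by
          linear_combination lam * t * hrec
        linarith
      · rw [dif_neg hlast]
        obtain ⟨m, hm⟩ : ∃ m, (j₀ : ℕ) = m + 1 := ⟨(j₀ : ℕ) - 1, by omega⟩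
        have hb1 := hub ⟨(j₀ : ℕ) - 1, Nat.lt_of_le_of_lt (Nat.sub_le _ _) j₀.isLt⟩
        have hb2 := hub ⟨(j₀ : ℕ) + 1, by have := j₀.isLt; omega⟩
        have hw1 : w (⟨(j₀ : ℕ) - 1, Nat.lt_of_le_of_lt (Nat.sub_le _ _) j₀.isLt⟩ : Fin (n+2))
            = Real.cos ((m : ℝ) * θ) := by
          show Real.cos ((((j₀:ℕ) - 1 : ℕ):ℝ) * θ) = _
          congr 2
          push_cast [hm]
          norm_num
        have hw2 : w (⟨(j₀ : ℕ) + 1, by have := j₀.isLt; omega⟩ : Fin (n+2))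
            = Real.cos (((m : ℝ) + 2) * θ) := by
          show Real.cos ((((j₀:ℕ) + 1 : ℕ):ℝ) * θ) = _
          congr 2
          push_cast [hm]
          ring
        have hwj₀ : w j₀ = Real.cos (((m : ℝ) + 1) * θ) := by
          show Real.cos (((j₀:ℕ):ℝ) * θ) = _
          rw [hm]; push_cast; ring_nf
        have hrec := cos_rec θ m
        have hwj₀pos := hwpos j₀
        rw [hwj₀] at hwj₀pos
        rw [htw, hwj₀]
        rw [hw1] at hb1
        rw [hw2] at hb2
        have hA := mul_le_mul_of_nonneg_left (add_le_add hb1 hb2) hlam.le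
        have hC := mul_lt_mul_of_pos_right hlt (mul_pos htpos hwj₀pos)
        have hD : lam * (t * Real.cos ((m:ℝ) * θ) + t * Real.cos (((m:ℝ) + 2) * θ))
            = 2 * lam * Real.cos θ * (t * Real.cos (((m:ℝ) + 1) * θ)) := by
          linear_combination lam * t * hrec
        linarith
  rw [heq] at hkey
  exact lt_irrefl _ hkey

end Aux

/-- The critical value is nonincreasing in N: λ_c(N+1) ≤ λ_c(N) for N ≥ 1. -/
theorem lamCrit_antitone (N : ℕ) (hN : 1 ≤ N) : lamCrit (N + 1) ≤ lamCrit N := by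
  obtain ⟨M, rfl⟩ : ∃ M, N = M + 1 := ⟨N - 1, by omega⟩
  have hmem2 := mem_root (M + 1)
  have hmem1 := mem_root M
  have hbdd : BddBelow {lam : ℝ | 0 < lam ∧ (-(matA lam (M + 1 + 1))).det = 0} :=
    ⟨0, fun x hx => hx.1.le⟩
  unfold lamCrit
  refine le_trans (csInf_le hbdd hmem2) (le_csInf ⟨_, hmem1⟩ ?_)
  intro b hb
  by_contra hcon
  push_neg at hcon
  set θ : ℝ := Real.pi / (2 * ((M + 1 : ℕ) : ℝ) + 4) with hθdef
  have hden : (0:ℝ) < 2 * ((M + 1 : ℕ) : ℝ) + 4 := by positivity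
  have hθpos : 0 < θ := div_pos Real.pi_pos hden
  have hθlt : θ < Real.pi / 2 := by
    rw [hθdef, div_lt_div_iff₀ hden two_pos]
    have hM : (0:ℝ) ≤ ((M + 1 : ℕ) : ℝ) := Nat.cast_nonneg _
    nlinarith [Real.pi_pos]
  have hc : 0 < Real.cos θ := Real.cos_pos_of_mem_Ioo ⟨by linarith [Real.pi_pos], hθlt⟩
  have hlt2 : 2 * b * Real.cos θ < 1 := by
    have h2c : (0:ℝ) < 2 * Real.cos θ := by positivity
    have h := (lt_div_iff₀ h2c).mp hcon
    calc 2 * b * Real.cos θ = b * (2 * Real.cos θ) := by ring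
      _ < 1 := h
  have hn : ((M : ℝ) + 2) * θ ≤ Real.pi / 2 := by
    have hcast : ((M + 1 : ℕ) : ℝ) = (M : ℝ) + 1 := by push_cast; ring
    rw [hθdef, hcast, mul_div_assoc', div_le_div_iff₀ (by positivity) two_pos]
    have hM : (0:ℝ) ≤ (M : ℝ) := Nat.cast_nonneg _
    nlinarith [Real.pi_pos]
  exact nonsing M θ b hθpos hn hb.1 hlt2 hb.2
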